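/- (Theorem 1.7, optimal colorful fractional Helly theorem for d-collapsible complexes.) Let d ≥ 1 and let K be a d-collapsible simplicial complex whose vertex set N is partitioned into d+1 disjoint subsets N = N_1 ⊔ ⋯ ⊔ N_{d+1} with n_i := |N_i| ≥ 1. Let α ∈ (0,1]. If K contains at least α·n_1⋯n_{d+1} colorful d-faces, then there exists i ∈ {1,…,d+1} such that dim K[N_i] ≥ (1 − (1−α)^{1/(d+1)})·n_i − 1. -/
import Mathlib


open scoped BigOperators

/-- A (finite abstract) simplicial complex: a family of finite subsets of the vertex
type closed under taking subsets. -/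
def IsComplex {V : Type*} [DecidableEq V] (K : Finset (Finset V)) : Prop :=
  ∀ A ∈ K, ∀ B ⊆ A, B ∈ K

/-- `K'` arises from `K` by an elementary `d`-collapse: there are faces `L, M ∈ K`
with `|L| ≤ d` (i.e. `dim L ≤ d - 1`) such that `M` is the unique inclusion-wise
maximal face of `K` containing `L` (equivalently, every face containing `L` is
contained in `M`), and `K'` is obtained from `K` by removing all faces containing `L`. -/
def ElemCollapse {V : Type*} [DecidableEq V] (d : ℕ) (K K' : Finset (Finset V)) : Prop :=
  ∃ L M, L ∈ K ∧ M ∈ K ∧ L.card ≤ d ∧ (∀ A ∈ K, L ⊆ A → A ⊆ M) ∧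
    K' = K.filter fun A => ¬ L ⊆ A

/-- `K` is `d`-collapsible: there is a sequence of elementary `d`-collapses from `K`
to the empty complex. -/
def Collapsible {V : Type*} [DecidableEq V] (d : ℕ) (K : Finset (Finset V)) : Prop :=
  Relation.ReflTransGen (ElemCollapse d) K ∅

set_option linter.unusedSectionVars false
set_option linter.unusedVariables false
set_option maxHeartbeats 1000000

noncomputable section OCFH

open Finset Polynomial

variable {V : Type} [Fintype V] [DecidableEq V] {d : ℕ}

/-- index type for colorful transversals -/
abbrev OCJ (color : V → Fin (d+1)) : Type := (i : Fin (d+1)) → {v : V // color v = i}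

variable (color : V → Fin (d+1))

def OCAset (j : OCJ color) : Finset V := univ.image fun i => (j i : V)

lemma OCAset_mem {j : OCJ color} {v : V} : v ∈ OCAset color j ↔ ∃ i, (j i : V) = v := by
  simp [OCAset]

lemma OCAset_eq {j : OCJ color} {v : V} (hv : v ∈ OCAset color j) : v = (j (color v) : V) := by
  rcases (OCAset_mem color).1 hv with ⟨i, hi⟩
  have : color v = i := by rw [← hi]; exact (j i).2
  rw [this, hi]

def OCten (x : Fin (d+1) → V → ℝ) : OCJ color → ℝ := fun j => ∏ i, x i (j i : V)

def OCeb (j : OCJ color) : OCJ color → ℝ := fun j' => if j' = j then 1 else 0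

def OCdelta (v : V) : V → ℝ := fun w => if w = v then 1 else 0

lemma OCten_delta (j : OCJ color) : OCten color (fun i => OCdelta (j i : V)) = OCeb color j := by
  funext j'
  by_cases h : j' = j
  · subst h; simp [OCten, OCeb, OCdelta]
  · have : ∃ i, j' i ≠ j i := by
      by_contra hc
      push_neg at hc
      exact h (funext hc)
    rcases this with ⟨i, hi⟩
    have hv : (j' i : V) ≠ (j i : V) := fun hh => hi (Subtype.ext hh)
    simp only [OCten, OCeb, if_neg h]
    exact Finset.prod_eq_zero (mem_univ i) (by simp [OCdelta, hv])

lemma OCexpand (w : OCJ color → ℝ) : w = ∑ j' : OCJ color, w j' • OCeb color j' := by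
  funext j₀
  simp only [Finset.sum_apply, Pi.smul_apply, OCeb, smul_eq_mul, mul_ite, mul_one, mul_zero]
  rw [Finset.sum_ite_eq univ j₀ w]
  simp

def OCemb : V → ℝ := fun v => ((Fintype.equivFin V v : ℕ) : ℝ)

lemma OCemb_inj : Function.Injective (OCemb (V := V)) := by
  intro a b h
  have : (Fintype.equivFin V a : ℕ) = (Fintype.equivFin V b : ℕ) := Nat.cast_injective h
  exact (Fintype.equivFin V).injective (Fin.ext this)

def OCf (K : Finset (Finset V)) (i : Fin (d+1)) : ℕ :=
  (K.filter fun A => ∀ v ∈ A, color v = i).sup Finset.card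

def OCZ (f : Fin (d+1) → ℕ) : Submodule ℝ (OCJ color → ℝ) :=
  Submodule.span ℝ {w | ∃ x : Fin (d+1) → V → ℝ, ∃ i p, Polynomial.degree p < (f i : ℕ) ∧
    x i = (fun v => p.eval (OCemb v)) ∧ w = OCten color x}

def OCNonf (B : Finset (Finset V)) : Submodule ℝ (OCJ color → ℝ) :=
  Submodule.span ℝ (OCeb color '' {j | OCAset color j ∉ B})

lemma OCkey (K : Finset (Finset V)) (hK : IsComplex K)
    (Acur : Finset (Finset V)) (hsub : Acur ⊆ K) (L M : Finset V) (hM : M ∈ Acur)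
    (hcard : L.card ≤ d) (hmax : ∀ F ∈ Acur, L ⊆ F → F ⊆ M)
    (j : OCJ color) (hLj : L ⊆ OCAset color j) (hjM : OCAset color j ⊆ M) :
    OCeb color j ∈ OCNonf color Acur ⊔ OCZ color (OCf color K) := by
  classical
  set f := OCf color K with hf
  set Mi : Fin (d+1) → Finset V := fun i => M.filter fun v => color v = i with hMi
  have hMiK : ∀ i, Mi i ∈ K := fun i => hK M (hsub hM) _ (filter_subset _ _)
  have hMicard : ∀ i, (Mi i).card ≤ f i := by
    intro i
    refine Finset.le_sup (f := Finset.card) ?_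
    rw [mem_filter]
    exact ⟨hMiK i, fun v hv => (mem_filter.1 hv).2⟩
  set T : Fin (d+1) → Prop := fun i => ∃ w ∈ L, color w = i with hT
  have hTdec : DecidablePred T := fun i => by rw [hT]; infer_instance
  set pl : Fin (d+1) → Polynomial ℝ :=
    fun i => Lagrange.interpolate (Mi i) OCemb (OCdelta (j i : V)) with hpl
  set u : Fin (d+1) → V → ℝ :=
    fun i => if T i then 0 else fun v => (pl i).eval (OCemb v) with hu
  set b : Fin (d+1) → V → ℝ := fun i => OCdelta (j i : V) - u i with hb
  have hinj : ∀ s : Finset V, Set.InjOn (OCemb (V := V)) ↑s := fun s => Function.Injective.injOn OCemb_inj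
  have hub : ∀ i, u i + b i = OCdelta (j i : V) := by
    intro i; rw [hb]; ring
  -- expansion
  have hexp : OCeb color j = ∑ S ∈ (univ : Finset (Fin (d+1))).powerset,
      OCten color (fun i => if i ∈ S then u i else b i) := by
    rw [← OCten_delta]
    funext j'
    have h1 : OCten color (fun i => OCdelta (j i : V)) j'
        = ∏ i, (u i (j' i : V) + b i (j' i : V)) := by
      simp only [OCten]
      refine Finset.prod_congr rfl fun i _ => ?_
      rw [← hub i]; rfl
    rw [h1, Finset.prod_add]
    simp only [Finset.sum_apply]
    refine Finset.sum_congr rfl fun S hS => ?_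
    have h2 : OCten color (fun i => if i ∈ S then u i else b i) j'
        = (∏ i ∈ S, u i (j' i : V)) * ∏ i ∈ univ \ S, b i (j' i : V) := by
      simp only [OCten]
      rw [← Finset.prod_filter_mul_prod_filter_not univ (· ∈ S)]
      congr 1
      · rw [Finset.filter_mem_eq_inter, Finset.univ_inter]
        exact Finset.prod_congr rfl fun i hi => by simp [hi]
      · rw [Finset.filter_not, Finset.filter_mem_eq_inter, Finset.univ_inter]
        refine Finset.prod_congr rfl fun i hi => ?_
        rw [Finset.mem_sdiff] at hi
        simp [hi.2]
    rw [h2]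
  rw [hexp]
  refine Submodule.sum_mem _ fun S hS => ?_
  rcases S.eq_empty_or_nonempty with hSe | ⟨i₀, hi₀⟩
  · -- S = ∅ : the term is `OCten color b`, lies in the span of nonfaces
    subst hSe
    have hbb : (fun i => if i ∈ (∅ : Finset (Fin (d+1))) then u i else b i) = b := by
      funext i; simp
    rw [hbb]
    refine Submodule.mem_sup_left ?_
    rw [OCexpand color (OCten color b)]
    refine Submodule.sum_mem _ fun j' _ => ?_
    by_cases hc : OCten color b j' = 0
    · rw [hc, zero_smul]; exact Submodule.zero_mem _
    · refine Submodule.smul_mem _ _ (Submodule.subset_span ⟨j', ?_, rfl⟩)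
      -- show `OCAset color j' ∉ Acur`
      have hall : ∀ i, b i (j' i : V) ≠ 0 := by
        intro i hzero
        exact hc (Finset.prod_eq_zero (mem_univ i) hzero)
      have hTeq : ∀ i, T i → (j' i : V) = (j i : V) := by
        intro i hTi
        have := hall i
        rw [hb] at this
        simp only [Pi.sub_apply, hu, if_pos hTi, Pi.zero_apply, sub_zero, OCdelta] at this
        by_contra hne
        simp [hne] at this
      have hTnot : ∀ i, ¬ T i → (j' i : V) ∉ M := by
        intro i hTi hmem
        have hnode : (j' i : V) ∈ Mi i := by
          rw [hMi]; exact mem_filter.2 ⟨hmem, (j' i).2⟩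
        have := hall i
        rw [hb] at this
        simp only [Pi.sub_apply, hu, if_neg hTi] at this
        rw [hpl] at this
        rw [Lagrange.eval_interpolate_at_node _ (hinj (Mi i)) hnode] at this
        simp at this
      -- L ⊆ OCAset color j'
      have hLj' : L ⊆ OCAset color j' := by
        intro w hw
        have hwj : w = (j (color w) : V) := OCAset_eq color (hLj hw)
        have hTw : T (color w) := ⟨w, hw, rfl⟩
        have : (j' (color w) : V) = w := by rw [hTeq (color w) hTw, ← hwj]
        rw [← this]
        exact (OCAset_mem color).2 ⟨color w, rfl⟩
      -- some color is not used by L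
      have hex : ∃ i, ¬ T i := by
        by_contra hcon
        push_neg at hcon
        have hsurj : (univ : Finset (Fin (d+1))) ⊆ L.image color := by
          intro i _
          rcases hcon i with ⟨w, hw, hcw⟩
          exact Finset.mem_image.2 ⟨w, hw, hcw⟩
        have h1 : (d+1) ≤ (L.image color).card := by
          have := Finset.card_le_card hsurj
          rwa [Finset.card_univ, Fintype.card_fin] at this
        have h2 : (L.image color).card ≤ L.card := Finset.card_image_le
        omega
      rcases hex with ⟨i₀, hi₀⟩
      have hnotsub : ¬ OCAset color j' ⊆ M := by
        intro hcon
        exact hTnot i₀ hi₀ (hcon ((OCAset_mem color).2 ⟨i₀, rfl⟩))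
      intro hmem
      exact hnotsub (hmax _ hmem hLj')
  · -- S nonempty
    by_cases hTi : T i₀
    · -- the `u i₀` slot is the zero function, whole term vanishes
      have : OCten color (fun i => if i ∈ S then u i else b i) = 0 := by
        funext j'
        refine Finset.prod_eq_zero (mem_univ i₀) ?_
        simp only [if_pos hi₀, hu, if_pos hTi, Pi.zero_apply]
      rw [this]
      exact Submodule.zero_mem _
    · refine Submodule.mem_sup_right (Submodule.subset_span ?_)
      refine ⟨_, i₀, pl i₀, ?_, ?_, rfl⟩
      · calc (pl i₀).degree < ((Mi i₀).card : ℕ) :=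
              Lagrange.degree_interpolate_lt _ (hinj (Mi i₀))
          _ ≤ (f i₀ : ℕ) := by exact_mod_cast Nat.cast_le.2 (hMicard i₀)
      · simp only [if_pos hi₀, hu, if_neg hTi]

lemma OCmain (K : Finset (Finset V)) (hK : IsComplex K)
    (hcoll : Collapsible d K) :
    ∀ j : OCJ color, OCeb color j ∈ OCNonf color K ⊔ OCZ color (OCf color K) := by
  have main : ∀ B, ∀ _h : Relation.ReflTransGen (ElemCollapse d) B (∅ : Finset (Finset V)),
      B ⊆ K → ∀ j : OCJ color, OCAset color j ∈ B →
        OCeb color j ∈ OCNonf color B ⊔ OCZ color (OCf color K) := by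
    intro B h
    induction h using Relation.ReflTransGen.head_induction_on with
    | refl => intro _ j hj; simp at hj
    | head hstep hrest ih =>
      rename_i a c
      intro hsubK j hj
      obtain ⟨L, M, hL, hM, hcard, hmax, hBeq⟩ := hstep
      have hcK : c ⊆ K := by
        rw [hBeq]; exact fun A hA => hsubK ((filter_subset _ _) hA)
      by_cases hLsub : L ⊆ OCAset color j
      · exact OCkey color K hK a hsubK L M hM hcard hmax j hLsub (hmax _ hj hLsub)
      · have hjc : OCAset color j ∈ c := by
          rw [hBeq]; exact mem_filter.2 ⟨hj, hLsub⟩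
        have hmem := ih hcK j hjc
        have hNle : OCNonf color c ≤ OCNonf color a ⊔ OCZ color (OCf color K) := by
          apply Submodule.span_le.2
          rintro w ⟨j', hj', rfl⟩
          by_cases hja : OCAset color j' ∈ a
          · have hLj' : L ⊆ OCAset color j' := by
              by_contra hno
              exact hj' (by rw [hBeq]; exact mem_filter.2 ⟨hja, hno⟩)
            exact OCkey color K hK a hsubK L M hM hcard hmax j' hLj' (hmax _ hja hLj')
          · exact Submodule.mem_sup_left (Submodule.subset_span ⟨j', hja, rfl⟩)
        exact (sup_le hNle le_sup_right : OCNonf color c ⊔ OCZ color (OCf color K) ≤ _) hmem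
  intro j
  by_cases hj : OCAset color j ∈ K
  · exact main K hcoll (le_refl _) j hj
  · exact Submodule.mem_sup_left (Submodule.subset_span ⟨j, hj, rfl⟩)

def OCpv (C : Fin (d+1) → Finset V) (i : Fin (d+1)) (v : V) : V → ℝ :=
  fun w => OCdelta v w - (Lagrange.interpolate (C i) OCemb (OCdelta v)).eval (OCemb w)

def OCPsi (C : Fin (d+1) → Finset V) : (OCJ color → ℝ) →ₗ[ℝ] (OCJ color → ℝ) where
  toFun := fun g => ∑ j' : OCJ color, g j' • OCten color (fun i => OCpv C i (j' i : V))
  map_add' := by intro g h; simp [add_smul, Finset.sum_add_distrib]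
  map_smul' := by intro c g; simp [smul_smul, Finset.smul_sum]

lemma OCPsi_eb (C : Fin (d+1) → Finset V) (j : OCJ color) :
    OCPsi color C (OCeb color j) = OCten color (fun i => OCpv C i (j i : V)) := by
  simp only [OCPsi, LinearMap.coe_mk, AddHom.coe_mk, OCeb]
  rw [Finset.sum_congr rfl (fun j' _ => by rw [ite_smul, one_smul, zero_smul])]
  rw [Finset.sum_ite_eq' univ j (fun j' => OCten color (fun i => OCpv C i (j' i : V)))]
  simp

lemma OCPsi_fix (C : Fin (d+1) → Finset V) (j : OCJ color)
    (h : ∀ i, (j i : V) ∉ C i) : OCPsi color C (OCeb color j) = OCeb color j := by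
  rw [OCPsi_eb]
  have : ∀ i, OCpv C i (j i : V) = OCdelta (j i : V) := by
    intro i
    funext w
    have hz : Lagrange.interpolate (C i) OCemb (OCdelta (j i : V)) = 0 := by
      rw [Lagrange.interpolate_apply]
      refine Finset.sum_eq_zero fun c hc => ?_
      have : OCdelta (j i : V) c = 0 := by
        have : c ≠ (j i : V) := fun hcc => h i (hcc ▸ hc)
        simp [OCdelta, this]
      rw [this]; simp
    simp [OCpv, hz]
  rw [show (fun i => OCpv C i (j i : V)) = fun i => OCdelta (j i : V) from funext this]
  exact OCten_delta color j

lemma OCsubtype_sum (i : Fin (d+1)) (F : V → ℝ) (w₀ : V) (h : color w₀ = i) :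
    ∑ y : {v : V // color v = i}, F (y : V) * (if w₀ = (y : V) then 1 else 0) = F w₀ := by
  rw [Finset.sum_eq_single (⟨w₀, h⟩ : {v : V // color v = i})]
  · simp
  · intro y _ hy
    have : w₀ ≠ (y : V) := by
      intro hc
      exact hy (by apply Subtype.ext; rw [← hc])
    simp [this]
  · intro hc; exact absurd (mem_univ _) hc

lemma OCPsi_ten (C : Fin (d+1) → Finset V) (x : Fin (d+1) → V → ℝ) :
    OCPsi color C (OCten color x) = fun j₀ =>
      ∏ i, ∑ y : {v : V // color v = i}, x i (y : V) * OCpv C i (y : V) (j₀ i : V) := by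
  funext j₀
  simp only [OCPsi, LinearMap.coe_mk, AddHom.coe_mk, Finset.sum_apply, Pi.smul_apply,
    smul_eq_mul, OCten]
  rw [Finset.prod_univ_sum]
  rw [Fintype.piFinset_univ]
  refine Finset.sum_congr rfl fun j' _ => ?_
  rw [← Finset.prod_mul_distrib]

lemma OCPsi_zero (C : Fin (d+1) → Finset V) (f : Fin (d+1) → ℕ)
    (hCsub : ∀ i, ∀ v ∈ C i, color v = i) (hCcard : ∀ i, (C i).card = f i) :
    OCZ color f ≤ LinearMap.ker (OCPsi color C) := by
  rw [OCZ, Submodule.span_le]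
  rintro w ⟨x, i₀, p, hdeg, hxi, rfl⟩
  simp only [SetLike.mem_coe, LinearMap.mem_ker]
  rw [OCPsi_ten]
  funext j₀
  refine Finset.prod_eq_zero (mem_univ i₀) ?_
  set w₀ : V := (j₀ i₀ : V) with hw₀
  have hw₀c : color w₀ = i₀ := (j₀ i₀).2
  have hinj : Set.InjOn (OCemb (V := V)) ↑(C i₀) := Function.Injective.injOn OCemb_inj
  -- split the sum into the delta part and the interpolation part
  have hsplit : ∀ y : {v : V // color v = i₀},
      x i₀ (y : V) * OCpv C i₀ (y : V) w₀
        = x i₀ (y : V) * OCdelta (y : V) w₀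
          - x i₀ (y : V) * (Lagrange.interpolate (C i₀) OCemb (OCdelta (y : V))).eval
              (OCemb w₀) := by
    intro y; rw [OCpv]; ring
  rw [Finset.sum_congr rfl fun y _ => hsplit y, Finset.sum_sub_distrib]
  -- first sum
  have h1 : ∑ y : {v : V // color v = i₀}, x i₀ (y : V) * OCdelta (y : V) w₀
      = x i₀ w₀ := by
    have : ∀ y : {v : V // color v = i₀},
        x i₀ (y : V) * OCdelta (y : V) w₀
          = x i₀ (y : V) * (if w₀ = (y : V) then 1 else 0) := by
      intro y; rfl
    rw [Finset.sum_congr rfl fun y _ => this y]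
    exact OCsubtype_sum color i₀ (x i₀) w₀ hw₀c
  -- second sum
  have h2 : ∑ y : {v : V // color v = i₀},
      x i₀ (y : V) * (Lagrange.interpolate (C i₀) OCemb (OCdelta (y : V))).eval (OCemb w₀)
      = x i₀ w₀ := by
    have hexp : ∀ y : {v : V // color v = i₀},
        x i₀ (y : V) * (Lagrange.interpolate (C i₀) OCemb (OCdelta (y : V))).eval (OCemb w₀)
          = ∑ c ∈ C i₀, (Lagrange.basis (C i₀) OCemb c).eval (OCemb w₀) *
              (x i₀ (y : V) * (if c = (y : V) then 1 else 0)) := by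
      intro y
      rw [Lagrange.interpolate_apply, Polynomial.eval_finset_sum]
      rw [Finset.mul_sum]
      refine Finset.sum_congr rfl fun c _ => ?_
      rw [Polynomial.eval_mul, Polynomial.eval_C]
      simp only [OCdelta]
      ring
    rw [Finset.sum_congr rfl fun y _ => hexp y, Finset.sum_comm]
    have hterm : ∀ c ∈ C i₀,
        ∑ y : {v : V // color v = i₀}, (Lagrange.basis (C i₀) OCemb c).eval (OCemb w₀) *
            (x i₀ (y : V) * (if c = (y : V) then 1 else 0))
          = (Lagrange.basis (C i₀) OCemb c).eval (OCemb w₀) * x i₀ c := by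
      intro c hc
      rw [← Finset.mul_sum, OCsubtype_sum color i₀ (x i₀) c (hCsub i₀ c hc)]
    rw [Finset.sum_congr rfl hterm]
    -- now use that `x i₀` is the evaluation of a polynomial of degree < card (C i₀)
    have hdeg' : p.degree < ((C i₀).card : ℕ) := by
      rw [hCcard i₀]; exact hdeg
    have hp := Lagrange.eq_interpolate (f := p) hinj hdeg'
    have hpev : p.eval (OCemb w₀)
        = ∑ c ∈ C i₀, (Lagrange.basis (C i₀) OCemb c).eval (OCemb w₀) * p.eval (OCemb c) := by
      conv_lhs => rw [hp]
      rw [Lagrange.interpolate_apply, Polynomial.eval_finset_sum]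
      refine Finset.sum_congr rfl fun c _ => ?_
      rw [Polynomial.eval_mul, Polynomial.eval_C]; ring
    rw [hxi]
    rw [← hpev]
  rw [h1, h2, sub_self]

lemma OCcount (K : Finset (Finset V)) (hK : IsComplex K) (hcoll : Collapsible d K) :
    ∏ i, ((univ.filter fun v => color v = i).card - OCf color K i)
      ≤ (univ.filter fun j : OCJ color => OCAset color j ∉ K).card := by
  classical
  set Ni : Fin (d+1) → Finset V := fun i => univ.filter fun v => color v = i with hNi
  set f : Fin (d+1) → ℕ := OCf color K with hfdef
  have hfle : ∀ i, f i ≤ (Ni i).card := by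
    intro i
    refine Finset.sup_le fun A hA => ?_
    rw [mem_filter] at hA
    refine Finset.card_le_card fun v hv => ?_
    rw [hNi]; exact mem_filter.2 ⟨mem_univ v, hA.2 v hv⟩
  choose C hCsub hCcard using fun i => Finset.exists_subset_card_eq (hfle i)
  have hCsub' : ∀ i, ∀ v ∈ C i, color v = i := by
    intro i v hv
    have := hCsub i hv
    rw [hNi] at this
    exact (mem_filter.1 this).2
  set D : Finset (OCJ color) :=
    Fintype.piFinset (fun i => (univ : Finset {v : V // color v = i}).filter
      fun y => (y : V) ∉ C i) with hD
  -- cardinality of D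
  have hDcard : D.card = ∏ i, ((Ni i).card - f i) := by
    rw [hD, Fintype.card_piFinset]
    refine Finset.prod_congr rfl fun i _ => ?_
    have hsplit := Finset.card_filter_add_card_filter_not
      (s := (univ : Finset {v : V // color v = i})) (p := fun y => y.1 ∉ C i)
    have himg : ((univ : Finset {v : V // color v = i}).filter
        (fun y => ¬ y.1 ∉ C i))
        = (C i).attach.image
            (fun c => (⟨c.1, hCsub' i c.1 c.2⟩ : {v : V // color v = i})) := by
      ext y
      simp only [mem_filter, mem_univ, true_and, not_not, Finset.mem_image, Finset.mem_attach]
      constructor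
      · intro hy
        exact ⟨⟨y.1, hy⟩, Subtype.ext rfl⟩
      · rintro ⟨c, -, rfl⟩
        exact c.2
    have hinjc : Function.Injective
        (fun c : {x // x ∈ C i} => (⟨c.1, hCsub' i c.1 c.2⟩ : {v : V // color v = i})) := by
      intro c₁ c₂ h
      apply Subtype.ext
      have h' : ((⟨c₁.1, hCsub' i c₁.1 c₁.2⟩ : {v : V // color v = i}) : V)
          = ((⟨c₂.1, hCsub' i c₂.1 c₂.2⟩ : {v : V // color v = i}) : V) :=
        congrArg Subtype.val h
      exact h'
    have hin : ((univ : Finset {v : V // color v = i}).filter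
        (fun y => ¬ y.1 ∉ C i)).card = (C i).card := by
      rw [himg, Finset.card_image_of_injective _ hinjc, Finset.card_attach]
    have htot : (univ : Finset {v : V // color v = i}).card = (Ni i).card := by
      rw [Finset.card_univ, Fintype.card_subtype]
    have hC := hCcard i
    omega
  -- the linearly independent family of nonface images
  have hmain := OCmain color K hK hcoll
  have hker := OCPsi_zero color C f hCsub' hCcard
  set Ψ := OCPsi color C with hΨ
  set Nf := OCNonf color K with hNf
  have hebD : ∀ j ∈ D, OCeb color j ∈ Submodule.map Ψ Nf := by
    intro j hj
    have hfix : Ψ (OCeb color j) = OCeb color j := by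
      refine OCPsi_fix color C j ?_
      intro i
      have := (Fintype.mem_piFinset.1 hj) i
      rw [mem_filter] at this
      exact this.2
    rcases Submodule.mem_sup.1 (hmain j) with ⟨y, hy, z, hz, hyz⟩
    have hΨz : Ψ z = 0 := hker hz
    have : Ψ (OCeb color j) = Ψ y := by
      rw [← hyz, map_add, hΨz, add_zero]
    rw [hfix] at this
    exact ⟨y, hy, this.symm⟩
  -- rank bound
  haveI : Module.Finite ℝ (OCJ color → ℝ) := inferInstance
  have hcard1 : D.card ≤ Module.finrank ℝ ↥(Submodule.map Ψ Nf) := by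
    have hli : LinearIndependent ℝ (fun jd : {j // j ∈ D} => OCeb color jd.1) := by
      have heq : (fun jd : {j // j ∈ D} => OCeb color jd.1)
          = fun jd : {j // j ∈ D} => (Pi.basisFun ℝ (OCJ color)) jd.1 := by
        funext jd
        rw [Pi.basisFun_apply]
        funext j'
        simp [OCeb, Pi.single_apply]
      rw [heq]
      exact (Pi.basisFun ℝ (OCJ color)).linearIndependent.comp Subtype.val Subtype.val_injective
    have hli' : LinearIndependent ℝ (fun jd : {j // j ∈ D} =>
        (⟨OCeb color jd.1, hebD jd.1 jd.2⟩ : ↥(Submodule.map Ψ Nf))) := by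
      apply LinearIndependent.of_comp (Submodule.map Ψ Nf).subtype
      exact hli
    have := hli'.fintype_card_le_finrank
    rwa [Fintype.card_coe] at this
  have hcard2 : Module.finrank ℝ ↥(Submodule.map Ψ Nf) ≤ Module.finrank ℝ ↥Nf :=
    Submodule.finrank_map_le Ψ Nf
  have hcard3 : Module.finrank ℝ ↥Nf
      ≤ (univ.filter fun j : OCJ color => OCAset color j ∉ K).card := by
    rw [hNf, OCNonf]
    set S : Set (OCJ color) := {j | OCAset color j ∉ K} with hS
    have h1 := finrank_span_le_card (R := ℝ) (OCeb color '' S)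
    refine le_trans h1 ?_
    rw [Set.toFinset_image]
    refine le_trans Finset.card_image_le ?_
    have hSeq : S.toFinset = univ.filter (fun j => OCAset color j ∉ K) := by
      ext j; simp [hS]
    rw [hSeq]
  rw [← hDcard]
  exact le_trans hcard1 (le_trans hcard2 hcard3)

lemma OCbij (K : Finset (Finset V)) :
    (univ.filter fun j : OCJ color => OCAset color j ∈ K).card
      = (K.filter fun A => ∀ i, (A.filter fun v => color v = i).card = 1).card := by
  refine Finset.card_bij (fun j _ => OCAset color j) ?_ ?_ ?_
  · intro j hj
    rw [mem_filter] at hj ⊢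
    refine ⟨hj.2, fun i => ?_⟩
    have heq : (OCAset color j).filter (fun v => color v = i) = {(j i : V)} := by
      ext v
      simp only [mem_filter, Finset.mem_singleton]
      constructor
      · rintro ⟨hv, hcv⟩
        have := OCAset_eq color hv
        rw [this, hcv]
      · rintro rfl
        exact ⟨(OCAset_mem color).2 ⟨i, rfl⟩, (j i).2⟩
    rw [heq, Finset.card_singleton]
  · intro j1 h1 j2 h2 h
    funext i
    apply Subtype.ext
    have h' : OCAset color j1 = OCAset color j2 := h
    have hmem : (j1 i : V) ∈ OCAset color j2 := h' ▸ (OCAset_mem color).2 ⟨i, rfl⟩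
    have h2' := OCAset_eq color hmem
    rwa [(j1 i).2] at h2'
  · intro A hA
    rw [mem_filter] at hA
    have hch : ∀ i, ∃ v, A.filter (fun w => color w = i) = {v} :=
      fun i => Finset.card_eq_one.1 (hA.2 i)
    choose a ha using hch
    have haA : ∀ i, a i ∈ A ∧ color (a i) = i := by
      intro i
      have : a i ∈ A.filter (fun w => color w = i) := (ha i) ▸ Finset.mem_singleton_self _
      exact mem_filter.1 this
    set j : OCJ color := fun i => ⟨a i, (haA i).2⟩ with hj
    have hAeq : OCAset color j = A := by
      ext v
      rw [OCAset_mem]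
      constructor
      · rintro ⟨i, rfl⟩
        exact (haA i).1
      · intro hv
        refine ⟨color v, ?_⟩
        have : v ∈ A.filter (fun w => color w = color v) := mem_filter.2 ⟨hv, rfl⟩
        rw [ha (color v), Finset.mem_singleton] at this
        exact this.symm
    exact ⟨j, mem_filter.2 ⟨mem_univ _, hAeq ▸ hA.1⟩, hAeq⟩

end OCFH


/-- **Theorem 1.7**: the optimal colorful fractional Helly theorem for
`d`-collapsible complexes. The vertex set of `K` is the fintype `V`, colored by
`color : V → Fin (d+1)` with all color classes nonempty. If at least
`α · n 1 ⋯ n (d+1)` of the colorful `d`-faces are in `K`, then for some `i` the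
induced subcomplex `K[N i]` has dimension at least
`(1 - (1-α)^(1/(d+1))) · n i - 1`. -/
theorem optimal_colorful_fractional_helly_collapsible
    (d : ℕ) (hd : 1 ≤ d) {V : Type} [Fintype V] [DecidableEq V]
    (K : Finset (Finset V)) (hK : IsComplex K) (hcoll : Collapsible d K)
    (color : V → Fin (d + 1))
    (hne : ∀ i, 1 ≤ (Finset.univ.filter fun v => color v = i).card)
    (α : ℝ) (hα0 : 0 < α) (hα1 : α ≤ 1)
    (hcount : α * ∏ i, ((Finset.univ.filter fun v => color v = i).card : ℝ) ≤
      ((K.filter fun A => ∀ i, (A.filter fun v => color v = i).card = 1).card : ℝ)) :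
    ∃ i : Fin (d + 1), ∃ A ∈ K, (∀ v ∈ A, color v = i) ∧
      (1 - (1 - α) ^ (1 / ((d : ℝ) + 1))) *
          ((Finset.univ.filter fun v => color v = i).card : ℝ) - 1
        ≤ (A.card : ℝ) - 1 := by
  classical
  set n : Fin (d+1) → ℕ := fun i => (Finset.univ.filter fun v => color v = i).card with hn
  set f : Fin (d+1) → ℕ := OCf color K with hf
  have hfle : ∀ i, f i ≤ n i := by
    intro i
    refine Finset.sup_le fun A hA => ?_
    rw [Finset.mem_filter] at hA
    refine Finset.card_le_card fun v hv => ?_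
    exact Finset.mem_filter.2 ⟨Finset.mem_univ v, hA.2 v hv⟩
  have hnpos : ∀ i, (0:ℝ) < n i := fun i => by exact_mod_cast hne i
  have hPpos : (0:ℝ) < ∏ i, (n i : ℝ) := Finset.prod_pos fun i _ => hnpos i
  -- K is nonempty, hence contains the empty face
  have hKne : K.Nonempty := by
    rcases Finset.eq_empty_or_nonempty K with hKe | h
    · exfalso
      subst hKe
      simp only [Finset.filter_empty, Finset.card_empty, Nat.cast_zero] at hcount
      nlinarith
    · exact h
  have hemptyK : (∅ : Finset V) ∈ K := by
    rcases hKne with ⟨A, hA⟩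
    exact hK A hA ∅ (Finset.empty_subset A)
  -- counting
  have hcnt := OCcount color K hK hcoll
  have hbij := OCbij color K
  have hsplitJ := Finset.card_filter_add_card_filter_not
    (s := (Finset.univ : Finset (OCJ color))) (p := fun j => OCAset color j ∈ K)
  have hcardJ : (Finset.univ : Finset (OCJ color)).card = ∏ i, n i := by
    rw [Finset.card_univ]
    rw [Fintype.card_pi]
    refine Finset.prod_congr rfl fun i _ => ?_
    rw [Fintype.card_subtype]
  -- the natural-number inequality:  ∏ (n i - f i) ≤ #nonfaces
  -- turn everything into reals
  have hkey : (∏ i, ((n i : ℝ) - f i)) ≤ (1 - α) * ∏ i, (n i : ℝ) := by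
    have hc1 : ((K.filter fun A => ∀ i, (A.filter fun v => color v = i).card = 1).card : ℝ)
        = ((Finset.univ.filter fun j : OCJ color => OCAset color j ∈ K).card : ℝ) := by
      exact_mod_cast hbij.symm
    have hcnt' : (∏ i, (n i - f i) : ℕ) ≤
        (Finset.univ.filter fun j : OCJ color => ¬ OCAset color j ∈ K).card := hcnt
    have hcastprod : ((∏ i, (n i - f i) : ℕ) : ℝ) = ∏ i, ((n i : ℝ) - f i) := by
      rw [Nat.cast_prod]
      exact Finset.prod_congr rfl fun i _ => by
        rw [Nat.cast_sub (hfle i)]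
    have h1 : ((Finset.univ.filter fun j : OCJ color => ¬ OCAset color j ∈ K).card : ℝ)
        = (∏ i, (n i : ℝ)) -
          ((Finset.univ.filter fun j : OCJ color => OCAset color j ∈ K).card : ℝ) := by
      have h := hsplitJ
      rw [hcardJ] at h
      have hcast : ((Finset.univ.filter fun j : OCJ color => OCAset color j ∈ K).card : ℝ)
          + ((Finset.univ.filter fun j : OCJ color => ¬ OCAset color j ∈ K).card : ℝ)
          = ∏ i, (n i : ℝ) := by exact_mod_cast h
      linarith
    have h2 : ((∏ i, (n i - f i) : ℕ) : ℝ) ≤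
        ((Finset.univ.filter fun j : OCJ color => ¬ OCAset color j ∈ K).card : ℝ) := by
      exact_mod_cast hcnt'
    rw [hcastprod] at h2
    rw [h1] at h2
    rw [← hc1] at h2
    nlinarith [hcount]
  -- choose a color class with a large face
  set β : ℝ := (1 - α) ^ (1 / ((d : ℝ) + 1)) with hβ
  have h1α : (0:ℝ) ≤ 1 - α := by linarith
  have hβ0 : 0 ≤ β := Real.rpow_nonneg h1α _
  have hβpow : β ^ (d + 1) = 1 - α := by
    rw [hβ, ← Real.rpow_natCast ((1 - α) ^ (1 / ((d:ℝ) + 1))) (d+1),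
      ← Real.rpow_mul h1α]
    have : 1 / ((d:ℝ) + 1) * ((d + 1 : ℕ) : ℝ) = 1 := by
      have : ((d : ℝ) + 1) ≠ 0 := by positivity
      push_cast
      field_simp
    rw [this, Real.rpow_one]
  have hex : ∃ i, ((n i : ℝ) - f i) ≤ β * n i := by
    by_contra hcon
    push_neg at hcon
    have hprodβ : ∏ i, (β * (n i : ℝ)) = (1 - α) * ∏ i, (n i : ℝ) := by
      rw [Finset.prod_mul_distrib, Finset.prod_const, Finset.card_univ, Fintype.card_fin,
        hβpow]
    rcases eq_or_lt_of_le hβ0 with hβz | hβpos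
    · have hzero : (1 - α) = 0 := by rw [← hβpow, ← hβz]; simp
      have hpos : (0:ℝ) < ∏ i, ((n i : ℝ) - f i) := by
        refine Finset.prod_pos fun i _ => ?_
        have := hcon i
        rw [← hβz] at this
        linarith
      rw [hzero] at hkey
      simp at hkey
      linarith
    · have hlt : ∏ i, (β * (n i : ℝ)) < ∏ i, ((n i : ℝ) - f i) := by
        refine Finset.prod_lt_prod_of_nonempty ?_ (fun i _ => hcon i) Finset.univ_nonempty
        intro i _
        exact mul_pos hβpos (hnpos i)
      rw [hprodβ] at hlt
      linarith
  rcases hex with ⟨i, hi⟩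
  -- the maximal monochromatic face of color i
  have hnefilter : (K.filter fun A => ∀ v ∈ A, color v = i).Nonempty :=
    ⟨∅, Finset.mem_filter.2 ⟨hemptyK, by simp⟩⟩
  obtain ⟨A, hAmem, hAsup⟩ := Finset.exists_mem_eq_sup _ hnefilter Finset.card
  rw [Finset.mem_filter] at hAmem
  refine ⟨i, A, hAmem.1, hAmem.2, ?_⟩
  have hAcard : (A.card : ℝ) = f i := by rw [hf, OCf, hAsup]
  have hfin : (1 - β) * (n i : ℝ) ≤ f i := by nlinarith [hnpos i]
  show (1 - β) * (n i : ℝ) - 1 ≤ (A.card : ℝ) - 1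
  rw [hAcard]
  linarith
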